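/- For every z ∈ (0,1), set α = 1 − z² and β = ((1−z)/(1+z))². Then α, β ∈ (0,1) and G(1−β)/G(β) = 2·G(1−α)/G(α); that is, (α, β) solves the classical modular equation of degree 2 (equivalently μ(s) = 2μ(r) with r² = α, s² = β). -/

import Mathlib

/-- The hypergeometric function `₂F₁(1/2, 1/2; 1; x)`, defined for `x ∈ (0,1)` by its
power series `∑ ((1/2)ₙ (1/2)ₙ / (n!)²) xⁿ`, where `(a)ₙ` is the rising factorial. -/
noncomputable def G (x : ℝ) : ℝ :=
  ∑' n : ℕ, (Polynomial.eval (1/2 : ℝ) (ascPochhammer ℝ n) *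
      Polynomial.eval (1/2 : ℝ) (ascPochhammer ℝ n) / (n.factorial : ℝ)^2) * x^n

open Real MeasureTheory Set

noncomputable def Pc (n : ℕ) : ℝ :=
  Polynomial.eval (1/2 : ℝ) (ascPochhammer ℝ n) / (n.factorial : ℝ)

lemma Pc_zero : Pc 0 = 1 := by simp [Pc]

lemma Pc_succ (n : ℕ) : Pc (n+1) = Pc n * ((2*n+1)/(2*n+2)) := by
  have hf : (n.factorial : ℝ) ≠ 0 := Nat.cast_ne_zero.2 n.factorial_ne_zero
  simp only [Pc, ascPochhammer_succ_right, Polynomial.eval_mul, Polynomial.eval_add,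
    Polynomial.eval_X, Polynomial.eval_natCast, Nat.factorial_succ, Nat.cast_mul]
  field_simp
  push_cast
  ring

lemma Pc_pos (n : ℕ) : 0 < Pc n := by
  induction n with
  | zero => simp [Pc_zero]
  | succ k ih => rw [Pc_succ]; positivity

lemma Pc_le_one (n : ℕ) : Pc n ≤ 1 := by
  induction n with
  | zero => simp [Pc_zero]
  | succ k ih =>
      rw [Pc_succ]
      have h1 : (2*(k:ℝ)+1)/(2*k+2) ≤ 1 := by
        rw [div_le_one (by positivity)]; linarith
      calc Pc k * ((2*(k:ℝ)+1)/(2*k+2)) ≤ 1 * 1 := by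
            apply mul_le_mul ih h1 (by positivity) one_pos.le
        _ = 1 := one_mul 1

noncomputable def Wa (n : ℕ) : ℝ := ∫ x in (0:ℝ)..(π/2), sin x ^ (2*n)

lemma Wa_zero : Wa 0 = π/2 := by simp [Wa]

lemma Wa_succ (n : ℕ) : Wa (n+1) = (2*n+1)/(2*n+2) * Wa n := by
  have h := integral_sin_pow (a := (0:ℝ)) (b := π/2) (2*n)
  have h2 : 2*(n+1) = 2*n+2 := by ring
  rw [Wa, Wa, h2, h]
  simp [Real.cos_pi_div_two]

lemma Wa_eq (n : ℕ) : Wa n = π/2 * Pc n := by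
  induction n with
  | zero => simp [Wa_zero, Pc_zero]
  | succ k ih => rw [Wa_succ, Pc_succ, ih]; ring

lemma cont_inv_sin_sq {r : ℝ} (h0 : 0 ≤ r) (h1 : r < 1) :
    Continuous fun x : ℝ => (1 - r * sin x ^ 2)⁻¹ := by
  apply Continuous.inv₀ (by continuity)
  intro x
  nlinarith [sin_sq_le_one x, sq_nonneg (sin x)]

lemma integral_inv_one_sub_mul_sin_sq {r : ℝ} (h0 : 0 ≤ r) (h1 : r < 1) :
    ∫ x in (0:ℝ)..(π/2), (1 - r * sin x ^ 2)⁻¹ = π / (2 * Real.sqrt (1-r)) := by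
  set t := Real.sqrt (1-r) with ht
  have ht0 : 0 < t := Real.sqrt_pos.2 (by linarith)
  have ht2 : t^2 = 1 - r := Real.sq_sqrt (by linarith)
  have hfc := cont_inv_sin_sq h0 h1
  have key : ∀ b ∈ Ico (0:ℝ) (π/2),
      ∫ x in (0:ℝ)..b, (1 - r * sin x ^ 2)⁻¹ = t⁻¹ * arctan (t * tan b) := by
    intro b hb
    have hderiv : ∀ x ∈ uIcc (0:ℝ) b,
        HasDerivAt (fun y => t⁻¹ * arctan (t * tan y)) ((1 - r * sin x ^ 2)⁻¹) x := by
      intro x hx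
      rw [uIcc_of_le hb.1] at hx
      have hcos : 0 < cos x := by
        apply cos_pos_of_mem_Ioo
        constructor
        · linarith [hx.1, pi_pos]
        · exact lt_of_le_of_lt hx.2 hb.2
      have h1' : HasDerivAt (fun y => t * tan y) (t * (1 / cos x ^ 2)) x :=
        (hasDerivAt_tan hcos.ne').const_mul t
      have h3 : HasDerivAt (fun y => t⁻¹ * arctan (t * tan y))
          (t⁻¹ * (1 / (1 + (t * tan x) ^ 2) * (t * (1 / cos x ^ 2)))) x :=
        (h1'.arctan).const_mul t⁻¹
      convert h3 using 1
      rw [tan_eq_sin_div_cos]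
      have hs : 1 - r * sin x ^ 2 = cos x ^ 2 + t ^ 2 * sin x ^ 2 := by
        have := sin_sq_add_cos_sq x
        nlinarith
      rw [hs]
      field_simp
    rw [intervalIntegral.integral_eq_sub_of_hasDerivAt hderiv
      (hfc.intervalIntegrable _ _)]
    simp
  have hL : Filter.Tendsto (fun b => ∫ x in (0:ℝ)..b, (1 - r * sin x ^ 2)⁻¹)
      (nhdsWithin (π/2) (Iio (π/2))) (nhds (∫ x in (0:ℝ)..(π/2), (1 - r * sin x ^ 2)⁻¹)) :=
    ((intervalIntegral.continuous_primitive
      (fun _ _ => hfc.intervalIntegrable _ _) 0).tendsto _).mono_left nhdsWithin_le_nhds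
  have hR : Filter.Tendsto (fun b => t⁻¹ * arctan (t * tan b))
      (nhdsWithin (π/2) (Iio (π/2))) (nhds (t⁻¹ * (π/2))) := by
    apply Filter.Tendsto.const_mul
    exact (tendsto_nhds_of_tendsto_nhdsWithin tendsto_arctan_atTop).comp
      (tendsto_tan_pi_div_two.const_mul_atTop ht0)
  have heq : (fun b => ∫ x in (0:ℝ)..b, (1 - r * sin x ^ 2)⁻¹)
      =ᶠ[nhdsWithin (π/2) (Iio (π/2))] (fun b => t⁻¹ * arctan (t * tan b)) := by
    filter_upwards [Ioo_mem_nhdsLT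
      (show (0 : ℝ) < π/2 by positivity)] with b hb
    exact key b ⟨hb.1.le, hb.2⟩
  have := tendsto_nhds_unique (hL.congr' heq) hR
  rw [this]
  rw [eq_div_iff (by positivity)]
  field_simp

lemma tsum_mul_Wa (a : ℕ → ℝ) (ha : ∀ n, 0 ≤ a n) (hs : Summable a) :
    ∑' n, a n * Wa n = ∫ x in (0:ℝ)..(π/2), ∑' n, a n * (sin x ^ 2) ^ n := by
  have h2 : (0:ℝ) ≤ π/2 := by positivity
  have hint : ∀ n : ℕ, Integrable (fun x => a n * (sin x ^ 2) ^ n)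
      (volume.restrict (Ioc (0:ℝ) (π/2))) := fun n =>
    Continuous.integrableOn_Ioc (by continuity)
  have hWa : ∀ n : ℕ, (∫ x in Ioc (0:ℝ) (π/2), (sin x ^ 2) ^ n) = Wa n := by
    intro n
    rw [Wa, intervalIntegral.integral_of_le h2]
    congr 1
    funext x
    rw [← pow_mul]
  have hnorm : ∀ n : ℕ, (∫ x in Ioc (0:ℝ) (π/2), ‖a n * (sin x ^ 2) ^ n‖) = a n * Wa n := by
    intro n
    have : ∀ x : ℝ, ‖a n * (sin x ^ 2) ^ n‖ = a n * (sin x ^ 2) ^ n := fun x =>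
      Real.norm_of_nonneg (mul_nonneg (ha n) (by positivity))
    simp only [this]
    rw [MeasureTheory.integral_const_mul, hWa]
  have hsum : Summable fun n => ∫ x in Ioc (0:ℝ) (π/2), ‖a n * (sin x ^ 2) ^ n‖ := by
    simp only [hnorm]
    apply Summable.of_nonneg_of_le
      (fun n => mul_nonneg (ha n) (by rw [Wa_eq]; nlinarith [pi_pos, Pc_pos n]))
      (fun n => ?_) (hs.mul_right (π/2))
    rw [Wa_eq]
    calc a n * (π/2 * Pc n) ≤ a n * (π/2 * 1) := by
          apply mul_le_mul_of_nonneg_left _ (ha n)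
          nlinarith [pi_pos, Pc_le_one n, Pc_pos n]
      _ = a n * (π/2) := by ring
  have := MeasureTheory.integral_tsum_of_summable_integral_norm hint hsum
  rw [intervalIntegral.integral_of_le h2]
  rw [← this]
  congr 1
  funext n
  rw [MeasureTheory.integral_const_mul, hWa]

lemma tsum_Pc_mul {r : ℝ} (h0 : 0 ≤ r) (h1 : r < 1) :
    ∑' n, Pc n * r ^ n = (Real.sqrt (1-r))⁻¹ := by
  have hswap := tsum_mul_Wa (fun n => r ^ n) (fun n => pow_nonneg h0 n)
    (summable_geometric_of_lt_one h0 h1)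
  have hinner : ∀ x : ℝ, (∑' n : ℕ, r ^ n * (sin x ^ 2) ^ n) = (1 - r * sin x ^ 2)⁻¹ := by
    intro x
    have hx1 : r * sin x ^ 2 < 1 :=
      lt_of_le_of_lt (by nlinarith [Real.sin_sq_le_one x]) h1
    rw [← tsum_geometric_of_lt_one (by positivity) hx1]
    congr 1; funext n; rw [mul_pow]
  simp only [hinner] at hswap
  rw [integral_inv_one_sub_mul_sin_sq h0 h1] at hswap
  have hL : (∑' n : ℕ, r ^ n * Wa n) = π/2 * ∑' n, Pc n * r ^ n := by
    rw [← tsum_mul_left]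
    congr 1; funext n; rw [Wa_eq]; ring
  rw [hL] at hswap
  have hsq : Real.sqrt (1-r) > 0 := Real.sqrt_pos.2 (by linarith)
  have hpi := pi_pos
  have h4 : (∑' n, Pc n * r ^ n) * √(1-r) = 1 := by
    field_simp at hswap
    nlinarith [hswap]
  field_simp
  linarith [h4]

lemma G_eq_tsum (x : ℝ) : G x = ∑' n : ℕ, Pc n ^ 2 * x ^ n := by
  unfold G Pc
  congr 1; funext n; rw [div_pow]; ring_nf

lemma summable_G {m : ℝ} (h0 : 0 ≤ m) (h1 : m < 1) :
    Summable fun n : ℕ => Pc n ^ 2 * m ^ n := by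
  apply Summable.of_nonneg_of_le (fun n => by positivity) (fun n => ?_)
    (summable_geometric_of_lt_one h0 h1)
  have h := Pc_le_one n
  have h' := Pc_pos n
  have : Pc n ^ 2 ≤ 1 := by nlinarith
  nlinarith [pow_nonneg h0 n]

lemma G_pos {m : ℝ} (h0 : 0 ≤ m) (h1 : m < 1) : 0 < G m := by
  rw [G_eq_tsum]
  apply Summable.tsum_pos (summable_G h0 h1) (fun n => by positivity) 0
  simp [Pc_zero]

lemma G_eq_integral {m : ℝ} (h0 : 0 ≤ m) (h1 : m < 1) :
    G m = (2/π) * ∫ x in (0:ℝ)..(π/2), (Real.sqrt (1 - m * sin x ^ 2))⁻¹ := by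
  have hswap := tsum_mul_Wa (fun n => Pc n * m ^ n)
    (fun n => mul_nonneg (Pc_pos n).le (pow_nonneg h0 n))
    (by
      apply Summable.of_nonneg_of_le (fun n => mul_nonneg (Pc_pos n).le (pow_nonneg h0 n))
        (fun n => ?_) (summable_geometric_of_lt_one h0 h1)
      have := Pc_le_one n
      have := Pc_pos n
      nlinarith [pow_nonneg h0 n])
  have hinner : ∀ x : ℝ, (∑' n : ℕ, Pc n * m ^ n * (sin x ^ 2) ^ n)
      = (Real.sqrt (1 - m * sin x ^ 2))⁻¹ := by
    intro x
    have hx1 : m * sin x ^ 2 < 1 :=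
      lt_of_le_of_lt (by nlinarith [Real.sin_sq_le_one x]) h1
    have hx0 : 0 ≤ m * sin x ^ 2 := by positivity
    rw [← tsum_Pc_mul hx0 hx1]
    congr 1; funext n; rw [mul_pow]; ring
  simp only [hinner] at hswap
  have hL : (∑' n : ℕ, Pc n * m ^ n * Wa n) = π/2 * ∑' n, Pc n ^ 2 * m ^ n := by
    rw [← tsum_mul_left]
    congr 1; funext n; rw [Wa_eq]; ring
  rw [hL] at hswap
  rw [G_eq_tsum, ← hswap]
  have hpi := pi_pos
  field_simp


noncomputable def Jint (a b : ℝ) : ℝ :=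
  ∫ t in Ioi (0:ℝ), (Real.sqrt ((t^2+a^2)*(t^2+b^2)))⁻¹

lemma Hm_eq_Jint {m : ℝ} (h0 : 0 ≤ m) (h1 : m < 1) :
    (∫ x in (0:ℝ)..(π/2), (Real.sqrt (1 - m * sin x ^ 2))⁻¹)
      = Jint 1 (Real.sqrt (1-m)) := by
  set b := Real.sqrt (1-m) with hbdef
  have hb : 0 < b := Real.sqrt_pos.2 (by linarith)
  have hb2 : b^2 = 1-m := Real.sq_sqrt (by linarith)
  have hs : MeasurableSet (Ioo (0:ℝ) (π/2)) := measurableSet_Ioo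
  have hcos : ∀ x ∈ Ioo (0:ℝ) (π/2), 0 < cos x := by
    intro x hx
    exact cos_pos_of_mem_Ioo ⟨by linarith [hx.1, pi_pos], hx.2⟩
  have hderiv : ∀ x ∈ Ioo (0:ℝ) (π/2),
      HasDerivWithinAt (fun x => b * tan x) (b * (1/cos x^2)) (Ioo (0:ℝ) (π/2)) x := by
    intro x hx
    exact ((hasDerivAt_tan (hcos x hx).ne').const_mul b).hasDerivWithinAt
  have hinj : InjOn (fun x => b * tan x) (Ioo (0:ℝ) (π/2)) := by
    intro x hx y hy hxy
    have h1' : tan x = tan y := mul_left_cancel₀ hb.ne' hxy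
    have hsub : Ioo (0:ℝ) (π/2) ⊆ Ioo (-(π/2)) (π/2) := by
      intro z hz; exact ⟨by linarith [hz.1, pi_pos], hz.2⟩
    exact Real.strictMonoOn_tan.injOn (hsub hx) (hsub hy) h1'
  have him : (fun x => b * tan x) '' Ioo (0:ℝ) (π/2) = Ioi 0 := by
    apply Subset.antisymm
    · rintro t ⟨x, hx, rfl⟩
      exact mul_pos hb (tan_pos_of_pos_of_lt_pi_div_two hx.1 hx.2)
    · intro t ht
      refine ⟨arctan (t/b), ⟨by { have := arctan_strictMono (show (0:ℝ) < t/b from div_pos ht hb); rwa [arctan_zero] at this }, arctan_lt_pi_div_two _⟩, ?_⟩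
      simp only [tan_arctan]
      field_simp
  have key := integral_image_eq_integral_abs_deriv_smul hs hderiv hinj
    (fun t => (Real.sqrt ((t^2+1^2)*(t^2+b^2)))⁻¹)
  rw [him] at key
  rw [Jint]
  simp only [show (1:ℝ)^2 = 1 by norm_num] at key ⊢
  rw [key]
  rw [intervalIntegral.integral_of_le (by positivity), integral_Ioc_eq_integral_Ioo]
  apply setIntegral_congr_fun hs
  intro x hx
  have hc := hcos x hx
  simp only []
  have e2 : (b*tan x)^2 + b^2 = b^2/cos x^2 := by
    rw [tan_eq_sin_div_cos]
    field_simp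
    linear_combination (sin_sq_add_cos_sq x)
  have e1 : (b*tan x)^2 + 1 = (1 - m*sin x^2)/cos x^2 := by
    rw [tan_eq_sin_div_cos]
    field_simp
    linear_combination sin x^2 * hb2 + sin_sq_add_cos_sq x
  have halg : ((b*tan x)^2+1)*((b*tan x)^2+b^2) = (1 - m*sin x^2) * (b/cos x^2)^2 := by
    rw [e1, e2]
    ring
  have h1m : (0:ℝ) < 1 - m * sin x^2 := by
    nlinarith [Real.sin_sq_le_one x, sq_nonneg (sin x)]
  have hbc : 0 < b / cos x^2 := by positivity
  rw [smul_eq_mul, halg, Real.sqrt_mul h1m.le, Real.sqrt_sq hbc.le,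
    abs_of_pos (by positivity : (0:ℝ) < b * (1/cos x^2))]
  have hsq : 0 < Real.sqrt (1 - m*sin x^2) := Real.sqrt_pos.2 h1m
  field_simp

lemma Jint_scale {a b : ℝ} (c : ℝ) (hc : 0 < c) : Jint (c*a) (c*b) = c⁻¹ * Jint a b := by
  have key := MeasureTheory.integral_comp_mul_left_Ioi
    (fun t => (Real.sqrt ((t^2+(c*a)^2)*(t^2+(c*b)^2)))⁻¹) 0 hc
  rw [mul_zero] at key
  simp only [smul_eq_mul] at key
  have hL : (∫ x in Ioi (0:ℝ), (Real.sqrt (((c*x)^2+(c*a)^2)*((c*x)^2+(c*b)^2)))⁻¹)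
      = (c^2)⁻¹ * Jint a b := by
    rw [Jint, ← MeasureTheory.integral_const_mul]
    apply setIntegral_congr_fun measurableSet_Ioi
    intro x _
    simp only []
    have h1 : ((c*x)^2+(c*a)^2)*((c*x)^2+(c*b)^2) = (c^2)^2 * ((x^2+a^2)*(x^2+b^2)) := by ring
    rw [h1, Real.sqrt_mul (by positivity), Real.sqrt_sq (by positivity)]
    rw [mul_inv]
  rw [hL] at key
  have key2 : (c^2)⁻¹ * Jint a b = c⁻¹ * Jint (c*a) (c*b) := by
    rw [key, Jint]
  have hc' : c ≠ 0 := hc.ne'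
  have h5 : c * ((c^2)⁻¹ * Jint a b) = c⁻¹ * Jint a b := by
    field_simp
  calc Jint (c*a) (c*b) = c * (c⁻¹ * Jint (c*a) (c*b)) := by field_simp
    _ = c * ((c^2)⁻¹ * Jint a b) := by rw [← key2]
    _ = c⁻¹ * Jint a b := h5

lemma Jint_agm {b : ℝ} (hb : 0 < b) : Jint ((1+b)/2) (Real.sqrt b) = Jint 1 b := by
  set f : ℝ → ℝ := fun u => (u - b/u)/2 with hf
  set f' : ℝ → ℝ := fun u => (1 + b/u^2)/2 with hf'
  have hs : MeasurableSet (Ioi (0:ℝ)) := measurableSet_Ioi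
  have hderiv : ∀ u ∈ Ioi (0:ℝ), HasDerivWithinAt f (f' u) (Ioi (0:ℝ)) u := by
    intro u hu
    have hu0 : u ≠ 0 := (ne_of_gt hu)
    have h1 : HasDerivAt (fun u : ℝ => (u - b/u)/2) ((1 - b * (-(u^2)⁻¹))/2) u := by
      have hinv : HasDerivAt (fun u : ℝ => b/u) (b * (-(u^2)⁻¹)) u := by
        simpa [div_eq_mul_inv, mul_comm] using ((hasDerivAt_inv hu0).const_mul b)
      exact ((hasDerivAt_id u).sub hinv).div_const 2
    have : (1 - b * (-(u^2)⁻¹))/2 = f' u := by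
      rw [hf']; field_simp; ring
    rw [← this]
    exact h1.hasDerivWithinAt
  have hinj : InjOn f (Ioi (0:ℝ)) := by
    intro u hu v hv huv
    have hu0 : (0:ℝ) < u := hu
    have hv0 : (0:ℝ) < v := hv
    rw [hf] at huv
    simp only [] at huv
    have h2 : (u - v) * (u*v + b) = 0 := by
      have h3 : u - b/u = v - b/v := by linarith [huv]
      field_simp at h3
      nlinarith [h3]
    have h4 : u*v + b > 0 := by positivity
    have := mul_eq_zero.1 h2
    rcases this with h | h
    · linarith
    · linarith
  have him : f '' Ioi (0:ℝ) = univ := by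
    apply Subset.antisymm (subset_univ _)
    intro t _
    have hr : 0 < Real.sqrt (t^2 + b) := Real.sqrt_pos.2 (by positivity)
    have habs : |t| < Real.sqrt (t^2+b) := by
      nlinarith [Real.sq_sqrt (show (0:ℝ) ≤ t^2+b by positivity), sq_abs t, abs_nonneg t]
    have hu0 : t + Real.sqrt (t^2+b) > 0 := by
      have := neg_abs_le t
      linarith
    refine ⟨t + Real.sqrt (t^2+b), hu0, ?_⟩
    rw [hf]
    simp only []
    rw [div_eq_iff (by norm_num : (2:ℝ) ≠ 0)]
    rw [sub_eq_iff_eq_add]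
    field_simp
    nlinarith [Real.sq_sqrt (show (0:ℝ) ≤ t^2+b by positivity)]
  have key := integral_image_eq_integral_abs_deriv_smul hs hderiv hinj
    (fun t => (Real.sqrt ((t^2+((1+b)/2)^2)*(t^2+(Real.sqrt b)^2)))⁻¹)
  rw [him] at key
  -- LHS of key = 2 * Jint ((1+b)/2) (√b)
  have hLHS : (∫ t : ℝ, (Real.sqrt ((t^2+((1+b)/2)^2)*(t^2+(Real.sqrt b)^2)))⁻¹)
      = 2 * Jint ((1+b)/2) (Real.sqrt b) := by
    rw [Jint, ← integral_comp_abs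
      (f := fun t => (Real.sqrt ((t^2+((1+b)/2)^2)*(t^2+(Real.sqrt b)^2)))⁻¹)]
    congr 1
    funext t
    rw [sq_abs]
  -- RHS of key = 2 * Jint 1 b
  have hRHS : (∫ u in Ioi (0:ℝ), |f' u| • (Real.sqrt (((f u)^2+((1+b)/2)^2)*((f u)^2+(Real.sqrt b)^2)))⁻¹)
      = 2 * Jint 1 b := by
    rw [Jint, ← MeasureTheory.integral_const_mul]
    apply setIntegral_congr_fun measurableSet_Ioi
    intro u hu
    simp only []
    have hu0 : (0:ℝ) < u := hu
    have hb2 : (Real.sqrt b)^2 = b := Real.sq_sqrt hb.le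
    have e1 : (f u)^2 + ((1+b)/2)^2 = (u^2+1)*(u^2+b^2) / (4*u^2) := by
      rw [hf]; field_simp; ring
    have e2 : (f u)^2 + (Real.sqrt b)^2 = ((u^2+b)/(2*u))^2 := by
      rw [hf, hb2]; field_simp; ring
    have hX : (0:ℝ) < (u^2+1)*(u^2+b^2) := by positivity
    have e3 : ((f u)^2+((1+b)/2)^2)*((f u)^2+(Real.sqrt b)^2)
        = ((u^2+1)*(u^2+b^2)) * ((u^2+b)/(4*u^2))^2 := by
      rw [e1, e2]; ring
    have hfp : f' u = (u^2+b)/(2*u^2) := by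
      rw [hf']
      field_simp
      try ring
      try (left; trivial)
    rw [smul_eq_mul, e3, Real.sqrt_mul hX.le, Real.sqrt_sq (by positivity), hfp,
      abs_of_pos (by positivity)]
    have hsX : 0 < Real.sqrt ((u^2+1)*(u^2+b^2)) := Real.sqrt_pos.2 hX
    rw [show (1:ℝ)^2 = 1 by norm_num]
    field_simp
    ring
  rw [MeasureTheory.setIntegral_univ] at key
  rw [hLHS, hRHS] at key
  linarith


lemma G_landen {t : ℝ} (h0 : 0 < t) (h1 : t < 1) :
    G (4*t/(1+t)^2) = (1+t) * G (t^2) := by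
  have ht1 : (0:ℝ) < 1 + t := by linarith
  set b := (1-t)/(1+t) with hbdef
  have hb0 : 0 < b := div_pos (by linarith) ht1
  have hb1 : b < 1 := by
    rw [hbdef, div_lt_one ht1]; linarith
  have hm1 : 4*t/(1+t)^2 = 1 - b^2 := by
    rw [hbdef]; field_simp; ring
  have hm0 : 0 < 4*t/(1+t)^2 := by positivity
  have hmlt : 4*t/(1+t)^2 < 1 := by nlinarith [sq_nonneg (1-t)]
  have hsq1 : Real.sqrt (1 - 4*t/(1+t)^2) = b := by
    rw [hm1]
    rw [show (1 - (1 - b^2)) = b^2 by ring]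
    exact Real.sqrt_sq hb0.le
  have ht2 : (0:ℝ) < 1 - t^2 := by nlinarith
  have hsb : Real.sqrt b = (1/(1+t)) * Real.sqrt (1 - t^2) := by
    have : 1 - t^2 = (1+t)^2 * b := by rw [hbdef]; field_simp; ring
    rw [this, Real.sqrt_mul (by positivity), Real.sqrt_sq ht1.le]
    field_simp
  have hstep1 : G (4*t/(1+t)^2) = (2/π) * Jint 1 b := by
    rw [G_eq_integral hm0.le hmlt, Hm_eq_Jint hm0.le hmlt, hsq1]
  have hstep2 : Jint 1 b = Jint ((1+b)/2) (Real.sqrt b) := (Jint_agm hb0).symm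
  have hhalf : (1+b)/2 = (1/(1+t)) * 1 := by
    rw [hbdef]; field_simp; ring
  have hstep3 : Jint ((1+b)/2) (Real.sqrt b) = (1+t) * Jint 1 (Real.sqrt (1-t^2)) := by
    rw [hhalf, hsb, Jint_scale (1/(1+t)) (by positivity)]
    congr 1
    field_simp
  have hstep4 : G (t^2) = (2/π) * Jint 1 (Real.sqrt (1-t^2)) := by
    rw [G_eq_integral (by positivity) (by nlinarith), Hm_eq_Jint (by positivity) (by nlinarith)]
  rw [hstep1, hstep2, hstep3, hstep4]
  ring

/-- Parametrization of the solutions of the classical modular equation of degree 2. -/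
theorem param_classical_deg2 (z : ℝ) (hz : z ∈ Set.Ioo (0:ℝ) 1)
    (α β : ℝ) (hαz : α = 1 - z^2) (hβz : β = ((1 - z) / (1 + z))^2) :
    α ∈ Set.Ioo (0:ℝ) 1 ∧ β ∈ Set.Ioo (0:ℝ) 1 ∧
      G (1 - β) / G β = 2 * (G (1 - α) / G α) := by
  obtain ⟨hz0, hz1⟩ := hz
  have hz1' : (0:ℝ) < 1 + z := by linarith
  have hα : α ∈ Set.Ioo (0:ℝ) 1 := by
    constructor <;> [nlinarith; nlinarith]
  have hx0 : 0 < (1-z)/(1+z) := div_pos (by linarith) hz1'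
  have hx1 : (1-z)/(1+z) < 1 := by rw [div_lt_one hz1']; linarith
  have hβ0 : 0 < β := by rw [hβz]; exact pow_pos hx0 2
  have hβ1 : β < 1 := by
    rw [hβz]
    nlinarith [hx0, hx1]
  refine ⟨hα, ⟨hβ0, hβ1⟩, ?_⟩
  have hone_sub_β : 1 - β = 4*z/(1+z)^2 := by
    rw [hβz]; field_simp; ring
  have h1 : G (1 - β) = (1+z) * G (1 - α) := by
    rw [hone_sub_β, hαz, show (1 - (1 - z^2)) = z^2 by ring]
    exact G_landen hz0 hz1
  have h2 := G_landen hx0 hx1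
  rw [← hβz] at h2
  have hαx : 4*((1-z)/(1+z))/(1+(1-z)/(1+z))^2 = α := by
    rw [hαz]; field_simp; ring
  rw [hαx] at h2
  have hx2 : 1+(1-z)/(1+z) = 2/(1+z) := by field_simp; ring
  rw [hx2] at h2
  have hGα : 0 < G α := G_pos hα.1.le hα.2
  have hGβ : 0 < G β := G_pos hβ0.le hβ1
  rw [h1, h2]
  rw [hx2] at *
  field_simp
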